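/- Let η(t) be a semi-Markov process on finite X with irreducible embedded chain and finite expectations, with initial state i ≠ r. Let _r η(t) be the reduced semi-Markov process on X \ {r} obtained by recording the states at successive hitting times of X \ {r} and the elapsed times between them. Then for any j ≠ r, the first hitting time τ_j of state j by η(t) equals the first hitting time _r τ_j of state j by _r η(t), almost surely; in particular E_i τ_j = E_i (_r τ_j). -/

import Mathlib

/-- Pathwise invariance of hitting times under phase-space reduction: for a trajectory
`η` of the embedded chain with sojourn times `κ`, starting outside `r`, if `ξ` enumerates
the successive visits to `X \ {r}`, `ν` is the first hitting index of `j ≠ r` by `η`,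
and `rν` is the first hitting index of `j` by the reduced chain `n ↦ η (ξ n)`, then the
hitting time `τ_j = ∑_{n=1}^{ν} κ_n` of the original semi-Markov process equals the
hitting time `∑_{n=1}^{rν} rκ_n` of the reduced semi-Markov process, where
`rκ_n = ∑_{m=ξ(n-1)+1}^{ξ n} κ_m`. -/
theorem reduced_hitting_time_eq {X : Type*} (r j : X) (hjr : j ≠ r)
    (η : ℕ → X) (κ : ℕ → ℝ) (hη0 : η 0 ≠ r)
    (ξ : ℕ → ℕ) (hξ0 : ξ 0 = 0)
    (hξ : ∀ n : ℕ, ξ n < ξ (n + 1) ∧ η (ξ (n + 1)) ≠ r ∧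
      ∀ m, ξ n < m → m < ξ (n + 1) → η m = r)
    (ν : ℕ) (hν1 : 1 ≤ ν) (hνj : η ν = j) (hνmin : ∀ m, 1 ≤ m → m < ν → η m ≠ j)
    (rν : ℕ) (hrν1 : 1 ≤ rν) (hrνj : η (ξ rν) = j)
    (hrνmin : ∀ m, 1 ≤ m → m < rν → η (ξ m) ≠ j) :
    ∑ n ∈ Finset.Icc 1 ν, κ n
      = ∑ n ∈ Finset.Icc 1 rν, ∑ m ∈ Finset.Icc (ξ (n - 1) + 1) (ξ n), κ m := by
  have hmono : StrictMono ξ := strictMono_nat_of_lt_succ fun n => (hξ n).1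
  -- every index with state ≠ r is hit by ξ
  have hsurj : ∀ m : ℕ, η m ≠ r → ∃ n, ξ n = m := by
    intro m hm
    set n := Nat.findGreatest (fun n => ξ n ≤ m) m with hn
    have h0 : ξ 0 ≤ m := by simp [hξ0]
    have hle : ξ n ≤ m :=
      Nat.findGreatest_spec (P := fun n => ξ n ≤ m) (Nat.zero_le m) h0
    have hlt : m < ξ (n + 1) := by
      by_cases h : n + 1 ≤ m
      · have hgt : ¬ ξ (n + 1) ≤ m :=
          Nat.findGreatest_is_greatest (P := fun n => ξ n ≤ m) (Nat.lt_succ_self n) h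
        omega
      · have hle2 : n + 1 ≤ ξ (n + 1) := hmono.le_apply (x := n + 1)
        omega
    rcases eq_or_lt_of_le hle with h | h
    · exact ⟨n, h⟩
    · exact absurd ((hξ n).2.2 m h hlt) hm
  -- ν = ξ rν
  obtain ⟨k, hk⟩ := hsurj ν (hνj ▸ hjr)
  have hk1 : 1 ≤ k := by
    rcases Nat.eq_zero_or_pos k with h | h
    · subst h; omega
    · exact h
  have hkrν : k = rν := by
    rcases lt_trichotomy k rν with h | h | h
    · exact absurd (hk ▸ hνj) (hrνmin k hk1 h)
    · exact h
    · have h1 : ξ rν < ν := hk ▸ hmono h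
      have h2 : 1 ≤ ξ rν := by
        have := hmono (show 0 < rν from hrν1)
        omega
      exact absurd hrνj (hνmin (ξ rν) h2 h1)
  have hν : ν = ξ rν := by rw [← hkrν, hk]
  -- telescoping of the double sum
  have htel : ∀ N : ℕ,
      ∑ n ∈ Finset.Icc 1 N, ∑ m ∈ Finset.Icc (ξ (n - 1) + 1) (ξ n), κ m
        = ∑ m ∈ Finset.Icc 1 (ξ N), κ m := by
    intro N
    induction N with
    | zero => simp [hξ0]
    | succ N ih =>
      rw [Finset.sum_Icc_succ_top (by omega : 1 ≤ N + 1), ih]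
      have h01 : (Finset.Icc 1 (ξ N)) = Finset.Ioc 0 (ξ N) := by
        ext x; simp [Nat.lt_iff_add_one_le]
      have h02 : (Finset.Icc (ξ (N + 1 - 1) + 1) (ξ (N + 1))) =
          Finset.Ioc (ξ N) (ξ (N + 1)) := by
        ext x; simp only [Finset.mem_Icc, Finset.mem_Ioc, Nat.add_sub_cancel]; omega
      have h03 : (Finset.Icc 1 (ξ (N + 1))) = Finset.Ioc 0 (ξ (N + 1)) := by
        ext x; simp [Nat.lt_iff_add_one_le]
      rw [h01, h02, h03]
      exact Finset.sum_Ioc_consecutive κ (Nat.zero_le _) (le_of_lt (hξ N).1)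
  rw [htel rν, hν]
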